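/- arXiv:1306.4277 — 2 statements merged into one kernel-verified Lean document; each statement's English description precedes it below -/
import Mathlib

section
/- Let f : [0,1] × [0,∞) → ℝ be continuous with f(s,u) = 0 for u > r. Fix (s, u₀) ∈ [0,1] × [0,r]. If (P_{p,q})_{q≥1} are polynomials uniformly bounded on [0, r+1] converging pointwise on [0, r+1] to the indicator of [u₀, u₀ + 1/p], then f(s,u₀) = lim_{p→∞} lim_{q→∞} p ∫_0^∞ P_{p,q}(u) f(s,u) du. -/
open MeasureTheory Set Filter

theorem stmt3 (f : ℝ → ℝ → ℝ) (hf : Continuous (Function.uncurry f))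
    (r : ℝ) (hr : 0 < r)
    (hvanish : ∀ s u, r < u → f s u = 0)
    (s u₀ : ℝ) (hs : s ∈ Set.Icc (0:ℝ) 1) (hu₀ : u₀ ∈ Set.Icc (0:ℝ) r)
    (P : ℕ → ℕ → Polynomial ℝ)
    (hbdd : ∀ p, ∃ C : ℝ, ∀ q, ∀ u ∈ Set.Icc (0:ℝ) (r + 1), |(P p q).eval u| ≤ C)
    (hconv : ∀ p : ℕ, 1 ≤ p → ∀ u ∈ Set.Icc (0:ℝ) (r + 1),
      Tendsto (fun q => (P p q).eval u) atTop
        (nhds (Set.indicator (Set.Icc u₀ (u₀ + 1 / (p : ℝ))) (fun _ => (1:ℝ)) u))) :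
    ∃ L : ℕ → ℝ,
      (∀ p : ℕ, 1 ≤ p →
        Tendsto (fun q => (p : ℝ) * ∫ u in Set.Ioi (0:ℝ), (P p q).eval u * f s u)
          atTop (nhds (L p))) ∧
      Tendsto L atTop (nhds (f s u₀)) := by
  have hfs : Continuous (f s) := hf.comp (Continuous.prodMk_right s)
  obtain ⟨M, hM⟩ := (isCompact_Icc : IsCompact (Icc (0:ℝ) (r+1))).exists_bound_of_continuousOn
    hfs.continuousOn
  refine ⟨fun p => (p : ℝ) * ∫ u in u₀..(u₀ + 1/(p:ℝ)), f s u, ?_, ?_⟩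
  · intro p hp
    have hp0 : 0 < (p:ℝ) := by exact_mod_cast hp
    have hb_le : u₀ + 1/(p:ℝ) ≤ r + 1 := by
      have h1 : 1/(p:ℝ) ≤ 1 := by
        rw [div_le_one hp0]; exact_mod_cast hp
      linarith [hu₀.2]
    have hu₀b : u₀ ≤ u₀ + 1/(p:ℝ) := le_add_of_nonneg_right (by positivity)
    obtain ⟨C, hC⟩ := hbdd p
    set C' := max C 0 with hC'
    -- dominated convergence
    have key : Tendsto (fun q => ∫ u in Set.Ioi (0:ℝ), (P p q).eval u * f s u) atTop
        (nhds (∫ u in Set.Ioi (0:ℝ),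
          Set.indicator (Set.Icc u₀ (u₀ + 1 / (p : ℝ))) (fun _ => (1:ℝ)) u * f s u)) := by
      apply tendsto_integral_of_dominated_convergence
        (Set.indicator (Icc (0:ℝ) (r+1)) (fun _ => C' * max M 0))
      · intro q
        exact ((P p q).continuous_aeval.mul hfs).aestronglyMeasurable
      · rw [integrable_indicator_iff measurableSet_Icc]
        exact integrableOn_const (by
          rw [Measure.restrict_apply measurableSet_Icc]
          exact (lt_of_le_of_lt (measure_mono Set.inter_subset_left) measure_Icc_lt_top).ne)
      · intro q
        rw [ae_restrict_iff' measurableSet_Ioi]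
        filter_upwards with u hu
        by_cases h : u ≤ r + 1
        · have hmem : u ∈ Icc (0:ℝ) (r+1) := ⟨le_of_lt hu, h⟩
          rw [Set.indicator_of_mem hmem]
          calc ‖(P p q).eval u * f s u‖ = |(P p q).eval u| * ‖f s u‖ := by
                rw [norm_mul]; rfl
            _ ≤ C' * max M 0 := by
                apply mul_le_mul ((hC q u hmem).trans (le_max_left _ _))
                  ((hM u hmem).trans (le_max_left _ _)) (norm_nonneg _)
                  (le_max_right _ _)
        · have hfz : f s u = 0 := hvanish s u (by linarith)
          rw [Set.indicator_of_notMem (by simp [Set.mem_Icc]; intro h0; linarith),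
            hfz, mul_zero, norm_zero]
      · rw [ae_restrict_iff' measurableSet_Ioi]
        filter_upwards with u hu
        by_cases h : u ≤ r + 1
        · exact (hconv p hp u ⟨le_of_lt hu, h⟩).mul tendsto_const_nhds
        · have hfz : f s u = 0 := hvanish s u (by linarith)
          simp only [hfz, mul_zero]
          exact tendsto_const_nhds
    have heq : (∫ u in Set.Ioi (0:ℝ),
        Set.indicator (Set.Icc u₀ (u₀ + 1 / (p : ℝ))) (fun _ => (1:ℝ)) u * f s u)
        = ∫ u in u₀..(u₀ + 1/(p:ℝ)), f s u := by
      have h1 : ∀ u, Set.indicator (Set.Icc u₀ (u₀ + 1 / (p : ℝ))) (fun _ => (1:ℝ)) u * f s u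
          = Set.indicator (Set.Icc u₀ (u₀ + 1 / (p : ℝ))) (f s) u := by
        intro u
        rcases em (u ∈ Set.Icc u₀ (u₀ + 1 / (p : ℝ))) with h | h
        · rw [Set.indicator_of_mem h, Set.indicator_of_mem h, one_mul]
        · rw [Set.indicator_of_notMem h, Set.indicator_of_notMem h, zero_mul]
      simp_rw [h1]
      rw [setIntegral_indicator measurableSet_Icc]
      rw [intervalIntegral.integral_of_le hu₀b]
      apply setIntegral_congr_set
      rw [MeasureTheory.ae_eq_set]
      constructor
      · refine measure_mono_null ?_ (measure_singleton (u₀ : ℝ))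
        · rintro u ⟨⟨hu1, hu2, hu3⟩, hu4⟩
          simp only [Set.mem_singleton_iff]
          rcases eq_or_lt_of_le hu2 with he | hlt
          · exact he.symm
          · exact absurd ⟨hlt, hu3⟩ hu4
      · refine measure_mono_null ?_ (measure_empty (μ := volume))
        · rintro u ⟨⟨hu1, hu2⟩, hu3⟩
          exact absurd ⟨lt_of_le_of_lt hu₀.1 hu1, ⟨le_of_lt hu1, hu2⟩⟩ hu3
    show Tendsto _ atTop (nhds ((p:ℝ) * ∫ u in u₀..(u₀ + 1/(p:ℝ)), f s u))
    rw [← heq]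
    exact (key.const_mul _)
  · -- second part
    have hF : HasDerivAt (fun x => ∫ t in u₀..x, f s t) (f s u₀) u₀ :=
      intervalIntegral.integral_hasDerivAt_right (hfs.intervalIntegrable _ _)
        (hfs.stronglyMeasurableAtFilter _ _) hfs.continuousAt
    have hslope := hasDerivAt_iff_tendsto_slope.mp hF
    have htend : Tendsto (fun p : ℕ => u₀ + 1/(p:ℝ)) atTop (nhdsWithin u₀ {u₀}ᶜ) := by
      rw [tendsto_nhdsWithin_iff]
      constructor
      · have : Tendsto (fun p : ℕ => 1/(p:ℝ)) atTop (nhds 0) :=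
          tendsto_one_div_atTop_nhds_zero_nat
        simpa using tendsto_const_nhds.add this
      · filter_upwards [eventually_ge_atTop 1] with p hp
        have hp0 : 0 < (p:ℝ) := by exact_mod_cast hp
        simp only [Set.mem_compl_iff, Set.mem_singleton_iff]
        intro h
        have : 1/(p:ℝ) = 0 := by linarith
        exact absurd this (by positivity)
    have := hslope.comp htend
    apply this.congr'
    filter_upwards [eventually_ge_atTop 1] with p hp
    have hp0 : 0 < (p:ℝ) := by exact_mod_cast hp
    simp only [Function.comp_apply, slope_def_field]
    rw [intervalIntegral.integral_same]
    field_simp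
    ring
end

section
/- An almost sure limit of a sequence of random variables, each belonging to a fixed closed linear space of centered Gaussian random variables in L², is itself a centered Gaussian random variable. -/
open MeasureTheory ProbabilityTheory Filter Real Complex
open scoped NNReal ENNReal


lemma cexp_integral_gauss {v : ℝ≥0} (hv : v ≠ 0) (t : ℝ) :
    ∫ x : ℝ, Real.exp (- x^2 / (2*(v:ℝ))) * Real.cos (t*x)
      = Real.sqrt (2*π*v) * Real.exp (-((v:ℝ) * t^2)/2) := by
  have hv' : (0:ℝ) < v := lt_of_le_of_ne v.coe_nonneg (by exact_mod_cast hv.symm)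
  set br : ℝ := - (1/(2*(v:ℝ))) with hbr
  set b : ℂ := (br : ℂ) with hb
  have hbrneg : br < 0 := by rw [hbr]; exact neg_lt_zero.mpr (by positivity)
  have hbre : b.re < 0 := by rw [hb, Complex.ofReal_re]; exact hbrneg
  have hb0 : b ≠ 0 := by rw [hb]; exact_mod_cast ne_of_lt hbrneg
  have hvc : ((v:ℝ) : ℂ) ≠ 0 := by exact_mod_cast ne_of_gt hv'
  have key := integral_cexp_quadratic hbre (t * Complex.I) 0
  have hint := integrable_cexp_quadratic' hbre (t * Complex.I) 0
  have hre : ∀ x : ℝ, (Complex.exp (b * x^2 + (t*Complex.I) * x + 0)).re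
      = Real.exp (- x^2 / (2*(v:ℝ))) * Real.cos (t*x) := by
    intro x
    rw [add_zero]
    have h1 : b * x^2 + (t*Complex.I)*x
        = Complex.ofReal (- x^2 / (2*(v:ℝ))) + (Complex.ofReal (t*x))*Complex.I := by
      rw [hb, hbr]
      push_cast
      field_simp [hvc]
    rw [h1, Complex.exp_add, ← Complex.ofReal_exp]
    rw [Complex.mul_re, Complex.ofReal_re, Complex.ofReal_im]
    simp [← Complex.ofReal_mul, Complex.exp_ofReal_mul_I_re]
  have lhs_eq : ∫ x : ℝ, Real.exp (- x^2 / (2*(v:ℝ))) * Real.cos (t*x)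
      = (∫ x : ℝ, Complex.exp (b * x^2 + (t*Complex.I) * x + 0)).re := by
    have h2 := integral_re (𝕜 := ℂ) hint
    simp only [RCLike.re_to_complex] at h2
    rw [← h2]
    exact integral_congr_ae (Filter.Eventually.of_forall fun x => (hre x).symm)
  rw [lhs_eq, key]
  have hnb : -b = (((2*(v:ℝ))⁻¹ : ℝ) : ℂ) := by rw [hb, hbr]; push_cast; ring
  have harg : (0 : ℂ) - (t*Complex.I)^2 / (4*b) = Complex.ofReal (-((v:ℝ)*t^2)/2) := by
    rw [hb, hbr]
    push_cast
    field_simp [hvc]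
    linear_combination (((t:ℂ))^2 * (((v:ℝ)):ℂ) * 4) * Complex.I_sq
  have hpow : ((π : ℂ) / -b) ^ (1/2 : ℂ) = (Real.sqrt (2*π*(v:ℝ)) : ℂ) := by
    rw [hnb]
    have h2 : ((π : ℂ) / (((2*(v:ℝ))⁻¹ : ℝ) : ℂ)) = ((2*π*(v:ℝ) : ℝ) : ℂ) := by
      push_cast
      field_simp
    rw [h2, show (1/2 : ℂ) = ((1/2 : ℝ) : ℂ) by norm_num,
      ← Complex.ofReal_cpow (by positivity)]
    norm_num [Real.sqrt_eq_rpow]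
  rw [harg, hpow, ← Complex.ofReal_exp, ← Complex.ofReal_mul, Complex.ofReal_re]


lemma integral_cos_gaussianReal (v : ℝ≥0) (t : ℝ) :
    ∫ x, Real.cos (t*x) ∂(gaussianReal 0 v) = Real.exp (-((v:ℝ) * t^2)/2) := by
  by_cases hv : v = 0
  · simp [hv, gaussianReal_zero_var]
  · rw [gaussianReal_of_var_ne_zero 0 hv]
    have hpdf : gaussianPDF 0 v = fun x => ((Real.toNNReal (gaussianPDFReal 0 v x) : ℝ≥0) : ℝ≥0∞) := by
      ext x
      rfl
    rw [hpdf, integral_withDensity_eq_integral_smul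
      ((measurable_gaussianPDFReal 0 v).real_toNNReal) (fun x => Real.cos (t*x))]
    have heq : ∀ x : ℝ, (Real.toNNReal (gaussianPDFReal 0 v x)) • Real.cos (t*x)
        = (Real.sqrt (2*π*v))⁻¹ * (Real.exp (- x^2 / (2*(v:ℝ))) * Real.cos (t*x)) := by
      intro x
      rw [NNReal.smul_def, smul_eq_mul, Real.coe_toNNReal _ (gaussianPDFReal_nonneg 0 v x)]
      rw [gaussianPDFReal]
      ring_nf
    rw [integral_congr_ae (Filter.Eventually.of_forall heq), integral_const_mul,
      cexp_integral_gauss hv t]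
    have h0 : Real.sqrt (2*π*(v:ℝ)) ≠ 0 := by
      have hv' : (0:ℝ) < v := lt_of_le_of_ne v.coe_nonneg (by exact_mod_cast (Ne.symm hv))
      positivity
    field_simp



lemma gaussianReal_eq_map_sqrt (w : ℝ≥0) :
    Measure.map (fun x : ℝ => Real.sqrt (w:ℝ) * x) (gaussianReal 0 1) = gaussianReal 0 w := by
  have h := gaussianReal_map_const_mul (μ := 0) (v := 1) (Real.sqrt (w:ℝ))
  have h2 : (⟨(Real.sqrt (w:ℝ))^2, sq_nonneg _⟩ : ℝ≥0) * 1 = w := by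
    ext
    simp [Real.sq_sqrt w.coe_nonneg]
  rw [mul_zero] at h
  rw [h]; congr 1

theorem stmt4 {Ω : Type*} [MeasurableSpace Ω] (P : Measure Ω) [IsProbabilityMeasure P]
    (X : ℕ → Ω → ℝ) (Xlim : Ω → ℝ)
    (hmeas : ∀ n, Measurable (X n)) (hmlim : Measurable Xlim)
    (hgauss : ∀ n, ∃ v : NNReal, Measure.map (X n) P = gaussianReal 0 v)
    (hconv : ∀ᵐ ω ∂P, Tendsto (fun n => X n ω) atTop (nhds (Xlim ω))) :
    ∃ v : NNReal, Measure.map Xlim P = gaussianReal 0 v := by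
  classical
  choose v hv using hgauss
  have hcosm : ∀ t : ℝ, Measurable fun x : ℝ => Real.cos (t*x) :=
    fun t => (Real.continuous_cos.comp (continuous_const.mul continuous_id)).measurable
  have hInt : ∀ n t, ∫ ω, Real.cos (t * X n ω) ∂P = Real.exp (-((v n : ℝ) * t^2)/2) := by
    intro n t
    rw [← integral_cos_gaussianReal (v n) t, ← hv n,
      integral_map (hmeas n).aemeasurable ((hcosm t).aestronglyMeasurable)]
  set L : ℝ → ℝ := fun t => ∫ ω, Real.cos (t * Xlim ω) ∂P with hL
  have hTend : ∀ t : ℝ, Tendsto (fun n => Real.exp (-((v n : ℝ) * t^2)/2)) atTop (nhds (L t)) := by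
    intro t
    have h := tendsto_integral_of_dominated_convergence (μ := P)
      (F := fun n ω => Real.cos (t * X n ω)) (f := fun ω => Real.cos (t * Xlim ω))
      (bound := fun _ => 1)
      (fun n => ((hcosm t).comp (hmeas n)).aestronglyMeasurable)
      (integrable_const 1)
      (fun n => Filter.Eventually.of_forall fun ω => by
        simpa using Real.abs_cos_le_one (t * X n ω))
      (hconv.mono fun ω hω =>
        (Real.continuous_cos.continuousAt.tendsto).comp (hω.const_mul t))
    exact Tendsto.congr (fun n => hInt n t) h
  have hc_nonneg : 0 ≤ L 1 := ge_of_tendsto' (hTend 1) fun n => (Real.exp_pos _).le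
  have hc_le_one : L 1 ≤ 1 := le_of_tendsto' (hTend 1) fun n => by
    rw [Real.exp_le_one_iff]
    have : (0:ℝ) ≤ (v n : ℝ) * 1^2 := by positivity
    linarith
  have hcpos : 0 < L 1 := by
    rcases lt_or_eq_of_le hc_nonneg with h | h
    · exact h
    exfalso
    -- L t = 0 for all t ≠ 0
    have hzero : ∀ t : ℝ, t ≠ 0 → L t = 0 := by
      intro t ht
      refine tendsto_nhds_unique (hTend t) ?_
      have h1 : ∀ n, Real.exp (-((v n : ℝ) * t^2)/2)
          = (Real.exp (-((v n:ℝ) * 1^2)/2)) ^ (t^2 : ℝ) := by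
        intro n
        rw [Real.rpow_def_of_pos (Real.exp_pos _), Real.log_exp]
        ring_nf
      have h2 : Tendsto (fun n => (Real.exp (-((v n:ℝ) * 1^2)/2)) ^ (t^2 : ℝ)) atTop
          (nhds ((0:ℝ) ^ (t^2 : ℝ))) := by
        have hcont : ContinuousAt (fun x : ℝ => x ^ (t^2 : ℝ)) 0 :=
          Real.continuousAt_rpow_const 0 (t^2) (Or.inr (sq_nonneg t))
        exact hcont.tendsto.comp (h ▸ hTend 1)
      rw [Real.zero_rpow (pow_ne_zero 2 ht)] at h2
      exact Tendsto.congr (fun n => (h1 n).symm) h2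
    have hone : Tendsto (fun k : ℕ => L (((k:ℝ)+1)⁻¹)) atTop (nhds 1) := by
      have h := tendsto_integral_of_dominated_convergence (μ := P)
        (F := fun k ω => Real.cos (((k:ℝ)+1)⁻¹ * Xlim ω)) (f := fun _ => (1:ℝ))
        (bound := fun _ => 1)
        (fun k => ((hcosm _).comp hmlim).aestronglyMeasurable)
        (integrable_const 1)
        (fun k => Filter.Eventually.of_forall fun ω => by
          simpa using Real.abs_cos_le_one (((k:ℝ)+1)⁻¹ * Xlim ω))
        (Filter.Eventually.of_forall fun ω => by
          have h0 : Tendsto (fun k : ℕ => ((k:ℝ)+1)⁻¹ * Xlim ω) atTop (nhds 0) := by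
            have h0' : Tendsto (fun k : ℕ => ((k:ℝ)+1)⁻¹) atTop (nhds 0) := by
              simpa [one_div] using tendsto_one_div_add_atTop_nhds_zero_nat (𝕜 := ℝ)
            simpa using h0'.mul_const (Xlim ω)
          simpa [Function.comp_def] using (Real.continuous_cos.continuousAt.tendsto).comp h0)
      simpa using h
    have : (1:ℝ) = 0 := by
      refine tendsto_nhds_unique hone ?_
      have : ∀ k : ℕ, L (((k:ℝ)+1)⁻¹) = 0 := fun k =>
        hzero _ (by positivity)
      simpa [this] using tendsto_const_nhds
    norm_num at this
  set v₀ℝ : ℝ := -2 * Real.log (L 1) with hv₀ℝ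
  have hv₀nonneg : 0 ≤ v₀ℝ := by
    have := Real.log_nonpos hc_nonneg hc_le_one
    nlinarith
  have hvconv : Tendsto (fun n => ((v n : ℝ))) atTop (nhds v₀ℝ) := by
    have h1 : ∀ n, (v n : ℝ) = -2 * Real.log (Real.exp (-((v n:ℝ) * 1^2)/2)) := by
      intro n
      rw [Real.log_exp]
      ring
    have h2 : Tendsto (fun n => -2 * Real.log (Real.exp (-((v n:ℝ) * 1^2)/2))) atTop
        (nhds (-2 * Real.log (L 1))) :=
      (((Real.continuousAt_log (ne_of_gt hcpos)).tendsto).comp (hTend 1)).const_mul (-2)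
    exact Tendsto.congr (fun n => (h1 n).symm) h2
  set v₀ : ℝ≥0 := Real.toNNReal v₀ℝ with hv₀def
  have hv₀coe : (v₀ : ℝ) = v₀ℝ := Real.coe_toNNReal _ hv₀nonneg
  refine ⟨v₀, ?_⟩
  -- identification via lintegrals of bounded continuous functions
  have hsqrtconv : Tendsto (fun n => Real.sqrt (v n : ℝ)) atTop (nhds (Real.sqrt (v₀ : ℝ))) := by
    rw [hv₀coe]
    exact (Real.continuous_sqrt.continuousAt.tendsto).comp hvconv
  have hPlim : IsProbabilityMeasure (Measure.map Xlim P) :=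
    Measure.isProbabilityMeasure_map hmlim.aemeasurable
  refine ext_of_forall_lintegral_eq_of_IsFiniteMeasure (fun f => ?_)
  have hfm : Measurable fun x : ℝ => (f x : ℝ≥0∞) :=
    measurable_coe_nnreal_ennreal.comp f.continuous.measurable
  set C : ℝ≥0∞ := (nndist f 0 : ℝ≥0∞) with hC
  have hfb : ∀ x : ℝ, (f x : ℝ≥0∞) ≤ C := fun x =>
    ENNReal.coe_le_coe.mpr (BoundedContinuousFunction.NNReal.upper_bound f x)
  -- limit 1 : through P
  have h1 : Tendsto (fun n => ∫⁻ x, (f x : ℝ≥0∞) ∂(Measure.map (X n) P)) atTop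
      (nhds (∫⁻ x, (f x : ℝ≥0∞) ∂(Measure.map Xlim P))) := by
    have heq : ∀ n, ∫⁻ x, (f x : ℝ≥0∞) ∂(Measure.map (X n) P) = ∫⁻ ω, (f (X n ω) : ℝ≥0∞) ∂P :=
      fun n => lintegral_map hfm (hmeas n)
    rw [lintegral_map hfm hmlim]
    refine Tendsto.congr (fun n => (heq n).symm) ?_
    refine tendsto_lintegral_of_dominated_convergence (fun _ => C)
      (fun n => hfm.comp (hmeas n)) (fun n => Filter.Eventually.of_forall fun ω => hfb _)
      (by simp only [hC, lintegral_const, measure_univ, mul_one]; exact ENNReal.coe_ne_top) ?_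
    exact hconv.mono fun ω hω =>
      (ENNReal.continuous_coe.continuousAt.tendsto).comp
        ((f.continuous.continuousAt.tendsto).comp hω)
  -- limit 2 : through gaussians
  have h2 : Tendsto (fun n => ∫⁻ x, (f x : ℝ≥0∞) ∂(gaussianReal 0 (v n))) atTop
      (nhds (∫⁻ x, (f x : ℝ≥0∞) ∂(gaussianReal 0 v₀))) := by
    have heq : ∀ w : ℝ≥0, ∫⁻ x, (f x : ℝ≥0∞) ∂(gaussianReal 0 w)
        = ∫⁻ x, (f (Real.sqrt (w:ℝ) * x) : ℝ≥0∞) ∂(gaussianReal 0 1) := by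
      intro w
      rw [← gaussianReal_eq_map_sqrt w, lintegral_map hfm (measurable_const_mul _)]
    simp only [heq]
    refine tendsto_lintegral_of_dominated_convergence (fun _ => C)
      (fun n => hfm.comp (measurable_const_mul _)) (fun n => Filter.Eventually.of_forall fun x => hfb _)
      (by simp only [hC, lintegral_const, measure_univ, mul_one]; exact ENNReal.coe_ne_top) ?_
    refine Filter.Eventually.of_forall fun x => ?_
    exact (ENNReal.continuous_coe.continuousAt.tendsto).comp
      ((f.continuous.continuousAt.tendsto).comp (hsqrtconv.mul_const x))
  have heqn : ∀ n, ∫⁻ x, (f x : ℝ≥0∞) ∂(Measure.map (X n) P)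
      = ∫⁻ x, (f x : ℝ≥0∞) ∂(gaussianReal 0 (v n)) := fun n => by rw [hv n]
  exact tendsto_nhds_unique (Tendsto.congr heqn h1) h2
end
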